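/- Let X be a separable Banach space and let (x_i, f_i) be a locally shrinking Schauder frame of X with projection constant K. Then for every normalized block sequence (u_i) of (x_i) and every ε > 0, there is a subsequence (v_i) of (u_i) which is a basic sequence with basis constant at most K + ε; that is, for all natural numbers m ≤ n and all real scalars a_1, …, a_n, one has ‖Σ_{i=1}^m a_i v_i‖ ≤ (K + ε)‖Σ_{i=1}^n a_i v_i‖. -/

import Mathlib

open Filter Topology

/-- `sup { |g z| : z ∈ span (x i : i ≥ n), ‖z‖ ≤ 1 }`. -/
noncomputable def tailSupX {X : Type*} [NormedAddCommGroup X] [NormedSpace ℝ X]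
    (x : ℕ → X) (g : X →L[ℝ] ℝ) (n : ℕ) : ℝ :=
  sSup ((fun z : X => |g z|) ''
    {z | z ∈ Submodule.span ℝ (x '' {i | n ≤ i}) ∧ ‖z‖ ≤ 1})

/-- `u` is a normalized block sequence of `(x i)`. -/
def IsNormalizedBlock {X : Type*} [NormedAddCommGroup X] [NormedSpace ℝ X]
    (x : ℕ → X) (u : ℕ → X) : Prop :=
  ∃ (m n : ℕ → ℕ) (a : ℕ → ℝ), (∀ k, m k ≤ n k) ∧ (∀ k, n k < m (k + 1)) ∧
    (∀ k, u k = ∑ i ∈ Finset.Icc (m k) (n k), a i • x i) ∧ ∀ k, ‖u k‖ = 1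

/-- Let `X` be a separable Banach space and `(x i, f i)` a locally
shrinking Schauder frame of `X` with projection constant `K`. Then every normalized block
sequence `(u i)` of `(x i)` has, for every `ε > 0`, a subsequence `(v i) = (u (φ i))`
which is a basic sequence with basis constant at most `K + ε`. -/
theorem schauderFrame_block_basic_subsequence
    {X : Type*} [NormedAddCommGroup X] [NormedSpace ℝ X] [CompleteSpace X]
    [TopologicalSpace.SeparableSpace X]
    (x : ℕ → X) (f : ℕ → X →L[ℝ] ℝ)
    (hx : ∀ i, x i ≠ 0) (hf : ∀ i, f i ≠ 0)
    (hframe : ∀ v : X,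
      Tendsto (fun n => ∑ i ∈ Finset.range n, f i v • x i) atTop (𝓝 v))
    (hshr : ∀ m : ℕ, Tendsto (tailSupX x (f m)) atTop (𝓝 0))
    (K : ℝ)
    (hK : IsLUB {r : ℝ | ∃ (v : X) (m n : ℕ), ‖v‖ ≤ 1 ∧ m ≤ n ∧
      r = ‖∑ i ∈ Finset.Icc m n, f i v • x i‖} K)
    (u : ℕ → X) (hu : IsNormalizedBlock x u) :
    ∀ ε > (0 : ℝ), ∃ φ : ℕ → ℕ, StrictMono φ ∧
      ∀ m n : ℕ, m ≤ n → ∀ a : ℕ → ℝ,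
        ‖∑ i ∈ Finset.range m, a i • u (φ i)‖ ≤
          (K + ε) * ‖∑ i ∈ Finset.range n, a i • u (φ i)‖ := by
  obtain ⟨mm, nn, aa, hmn, hnm, hudef, hunorm⟩ := hu
  intro ε hε
  -- K is positive
  have hK0 : 0 < K := by
    have hex0 : ∃ v : X, f 0 v ≠ 0 := by
      by_contra h
      push_neg at h
      exact hf 0 (by ext v; simp [h v])
    obtain ⟨v, hv⟩ := hex0
    have hvne : v ≠ 0 := fun h => hv (by simp [h])
    have hvn : (0:ℝ) < ‖v‖ := norm_pos_iff.2 hvne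
    set w := ‖v‖⁻¹ • v with hw
    have hwn : ‖w‖ ≤ 1 := by
      rw [hw, norm_smul, norm_inv, norm_norm, inv_mul_cancel₀ hvn.ne']
    have hmem : ‖∑ i ∈ Finset.Icc 0 0, f i w • x i‖ ∈
        {r : ℝ | ∃ (v : X) (m n : ℕ), ‖v‖ ≤ 1 ∧ m ≤ n ∧
          r = ‖∑ i ∈ Finset.Icc m n, f i v • x i‖} := ⟨w, 0, 0, hwn, le_refl 0, rfl⟩
    have hle := hK.1 hmem
    have : ‖∑ i ∈ Finset.Icc 0 0, f i w • x i‖ = |f 0 w| * ‖x 0‖ := by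
      simp [norm_smul]
    rw [this] at hle
    have hfw : f 0 w ≠ 0 := by
      rw [hw]
      simp only [map_smul, smul_eq_mul]
      exact mul_ne_zero (inv_ne_zero hvn.ne') hv
    have : 0 < |f 0 w| * ‖x 0‖ :=
      mul_pos (abs_pos.2 hfw) (norm_pos_iff.2 (hx 0))
    linarith
  have hKε : 0 < K + ε := by linarith
  set δ : ℝ := ε / (8 * (K + ε)) with hδdef
  have hδ : 0 < δ := by positivity
  -- The partial frame operator
  set P : ℕ → X →L[ℝ] X := fun t => ∑ j ∈ Finset.range t, (f j).smulRight (x j) with hPdef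
  have hPapply : ∀ (t : ℕ) (y : X), P t y = ∑ j ∈ Finset.range t, f j y • x j := by
    intro t y
    rw [hPdef]
    simp [ContinuousLinearMap.sum_apply]
  have hPK : ∀ (t : ℕ) (y : X), ‖P t y‖ ≤ K * ‖y‖ := by
    intro t y
    rcases eq_or_ne y 0 with rfl | hy
    · simp
    rcases Nat.eq_zero_or_pos t with rfl | ht
    · rw [hPdef]
      simp
      positivity
    obtain ⟨s, rfl⟩ := Nat.exists_eq_add_of_le ht
    have hyn : (0:ℝ) < ‖y‖ := norm_pos_iff.2 hy
    set w := ‖y‖⁻¹ • y with hw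
    have hwn : ‖w‖ ≤ 1 := by
      rw [hw, norm_smul, norm_inv, norm_norm, inv_mul_cancel₀ hyn.ne']
    have hmem : ‖∑ i ∈ Finset.Icc 0 s, f i w • x i‖ ∈
        {r : ℝ | ∃ (v : X) (m n : ℕ), ‖v‖ ≤ 1 ∧ m ≤ n ∧
          r = ‖∑ i ∈ Finset.Icc m n, f i v • x i‖} := ⟨w, 0, s, hwn, Nat.zero_le s, rfl⟩
    have hle := hK.1 hmem
    have heq : ∑ i ∈ Finset.Icc 0 s, f i w • x i = ‖y‖⁻¹ • P (1 + s) y := by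
      rw [hPapply, Finset.smul_sum, Nat.add_comm 1 s, ← Finset.Ico_add_one_right_eq_Icc,
        ← Finset.range_eq_Ico]
      refine Finset.sum_congr rfl fun j _ => ?_
      rw [hw, map_smul, smul_eq_mul, mul_smul]
    rw [heq, norm_smul, norm_inv, norm_norm] at hle
    calc ‖P (1+s) y‖ = ‖y‖ * (‖y‖⁻¹ * ‖P (1+s) y‖) := by
          field_simp
      _ ≤ ‖y‖ * K := mul_le_mul_of_nonneg_left hle (norm_nonneg y)
      _ = K * ‖y‖ := mul_comm _ _
  -- block start function is strictly monotone
  have hmmmono : StrictMono mm :=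
    strictMono_nat_of_lt_succ fun k => lt_of_le_of_lt (hmn k) (hnm k)
  have humem : ∀ l, u l ∈ Submodule.span ℝ (x '' {i | mm l ≤ i}) := by
    intro l
    rw [hudef]
    refine Submodule.sum_mem _ fun i hi => Submodule.smul_mem _ _ ?_
    exact Submodule.subset_span ⟨i, (Finset.mem_Icc.mp hi).1, rfl⟩
  -- tail sup bound
  have htail : ∀ (g : X →L[ℝ] ℝ) (N : ℕ) (z : X),
      z ∈ Submodule.span ℝ (x '' {i | N ≤ i}) → ‖z‖ ≤ 1 → |g z| ≤ tailSupX x g N := by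
    intro g N z hz hz1
    refine le_csSup ⟨‖g‖, ?_⟩ ⟨z, ⟨hz, hz1⟩, rfl⟩
    rintro _ ⟨w, ⟨-, hw1⟩, rfl⟩
    calc |g w| = ‖g w‖ := (Real.norm_eq_abs _).symm
      _ ≤ ‖g‖ * ‖w‖ := g.le_opNorm w
      _ ≤ ‖g‖ * 1 := mul_le_mul_of_nonneg_left hw1 (norm_nonneg g)
      _ = ‖g‖ := mul_one _
  -- existence of the next step in the construction
  have hex : ∀ (k : ℕ) (pt : ℕ × ℕ), ∃ pt' : ℕ × ℕ, pt.1 < pt'.1 ∧ pt.2 < pt'.2 ∧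
      (∀ l ≤ pt.1, ‖u l - P pt'.2 (u l)‖ ≤ δ / (k + 2)) ∧
      (∀ j < pt'.2, tailSupX x (f j) (mm pt'.1) ≤
        (1/2 : ℝ)^(k+1) * δ / (1 + ∑ j ∈ Finset.range pt'.2, ‖x j‖)) := by
    intro k pt
    -- choose t'
    have hA : ∀ l ∈ Finset.range (pt.1 + 1), ∀ᶠ t' in atTop,
        ‖u l - P t' (u l)‖ ≤ δ / (k + 2) := by
      intro l _
      have hc : Tendsto (fun t => P t (u l)) atTop (𝓝 (u l)) := by
        have h0 := hframe (u l)
        have : (fun t => P t (u l)) = fun t => ∑ i ∈ Finset.range t, f i (u l) • x i := by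
          funext t; rw [hPapply]
        rw [this]; exact h0
      have hnorm : Tendsto (fun t => ‖u l - P t (u l)‖) atTop (𝓝 0) := by
        have h1 : Tendsto (fun _ : ℕ => u l) atTop (𝓝 (u l)) := tendsto_const_nhds
        have := (h1.sub hc).norm
        simpa using this
      have hpos : (0:ℝ) < δ / (k + 2) := by positivity
      exact (hnorm.eventually_lt_const hpos).mono fun t ht => ht.le
    obtain ⟨t', ht'A, ht'gt⟩ :=
      (((Filter.eventually_all_finset (Finset.range (pt.1 + 1))).mpr hA).and
        (eventually_gt_atTop pt.2)).exists
    have hSx : (0:ℝ) < 1 + ∑ j ∈ Finset.range t', ‖x j‖ := by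
      have : (0:ℝ) ≤ ∑ j ∈ Finset.range t', ‖x j‖ :=
        Finset.sum_nonneg fun j _ => norm_nonneg _
      linarith
    set η : ℝ := (1/2 : ℝ)^(k+1) * δ / (1 + ∑ j ∈ Finset.range t', ‖x j‖) with hηdef
    have hηpos : 0 < η := div_pos (by positivity) hSx
    have hB : ∀ j ∈ Finset.range t', ∀ᶠ N in atTop, tailSupX x (f j) N ≤ η := by
      intro j _
      exact ((hshr j).eventually_lt_const hηpos).mono fun N hN => hN.le
    obtain ⟨N₀, hN₀⟩ := eventually_atTop.mp
      ((Filter.eventually_all_finset (Finset.range t')).mpr hB)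
    refine ⟨(max (pt.1 + 1) N₀, t'), ?_, ht'gt, ?_, ?_⟩
    · exact lt_of_lt_of_le (Nat.lt_succ_self _) (le_max_left _ _)
    · intro l hl
      exact ht'A l (Finset.mem_range.mpr (by omega))
    · intro j hj
      exact hN₀ (mm (max (pt.1 + 1) N₀))
        (le_trans (le_max_right _ _) hmmmono.le_apply) j (Finset.mem_range.mpr hj)
  choose F hF1 hF2 hF3 hF4 using hex
  set g : ℕ → ℕ × ℕ := fun k => Nat.rec ((0:ℕ), (0:ℕ)) (fun k ih => F k ih) k with hgdef
  have hgs : ∀ k, g (k+1) = F k (g k) := fun k => rfl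
  set φ : ℕ → ℕ := fun k => (g k).1 with hφdef
  set q : ℕ → ℕ := fun k => (g k).2 with hqdef
  have hφmono : StrictMono φ := strictMono_nat_of_lt_succ fun k => by
    rw [hφdef]; simp only; rw [hgs k]; exact hF1 k (g k)
  have hqmono : Monotone q := (strictMono_nat_of_lt_succ fun k => by
    rw [hqdef]; simp only; rw [hgs k]; exact hF2 k (g k)).monotone
  have hq0 : q 0 = 0 := rfl
  -- D1
  have D1 : ∀ (m j : ℕ), j < m → ‖u (φ j) - P (q m) (u (φ j))‖ ≤ δ / (m + 1) := by
    intro m j hj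
    obtain ⟨s, rfl⟩ : ∃ s, m = s + 1 := ⟨m - 1, by omega⟩
    have h1 : φ j ≤ φ s := hφmono.monotone (by omega)
    have := hF3 s (g s) (φ j) h1
    rw [← hgs s] at this
    convert this using 2
    push_cast; ring
  -- D2
  have D2 : ∀ (m k : ℕ), m ≤ k → ‖P (q m) (u (φ k))‖ ≤ (1/2 : ℝ)^k * δ := by
    intro m k hmk
    rcases Nat.eq_zero_or_pos k with rfl | hk
    · have : m = 0 := by omega
      subst this
      rw [hq0, hPdef]
      simp
      positivity
    obtain ⟨s, rfl⟩ : ∃ s, k = s + 1 := ⟨k - 1, by omega⟩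
    have htc := hF4 s (g s)
    rw [← hgs s] at htc
    set S : ℝ := ∑ j ∈ Finset.range (q (s+1)), ‖x j‖ with hS
    have hS0 : 0 ≤ S := Finset.sum_nonneg fun j _ => norm_nonneg _
    set η : ℝ := (1/2 : ℝ)^(s+1) * δ / (1 + S) with hη
    have hfj : ∀ j < q (s+1), |f j (u (φ (s+1)))| ≤ η := by
      intro j hj
      exact le_trans (htail (f j) (mm (φ (s+1))) _ (humem _) (hunorm _).le) (htc j hj)
    have hqm : q m ≤ q (s+1) := hqmono hmk
    calc ‖P (q m) (u (φ (s+1)))‖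
        = ‖∑ j ∈ Finset.range (q m), f j (u (φ (s+1))) • x j‖ := by rw [hPapply]
      _ ≤ ∑ j ∈ Finset.range (q m), ‖f j (u (φ (s+1))) • x j‖ := norm_sum_le _ _
      _ = ∑ j ∈ Finset.range (q m), |f j (u (φ (s+1)))| * ‖x j‖ := by
          simp [norm_smul]
      _ ≤ ∑ j ∈ Finset.range (q m), η * ‖x j‖ := by
          refine Finset.sum_le_sum fun j hj => ?_
          have hj' : j < q (s+1) := lt_of_lt_of_le (Finset.mem_range.mp hj) hqm
          exact mul_le_mul_of_nonneg_right (hfj j hj') (norm_nonneg _)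
      _ ≤ ∑ j ∈ Finset.range (q (s+1)), η * ‖x j‖ := by
          refine Finset.sum_le_sum_of_subset_of_nonneg
            (Finset.range_subset_range.mpr hqm) fun j _ _ => ?_
          have : 0 ≤ η := by positivity
          positivity
      _ = η * S := by rw [hS, Finset.mul_sum]
      _ ≤ η * (1 + S) := by
          have : 0 ≤ η := by positivity
          nlinarith
      _ = (1/2 : ℝ)^(s+1) * δ := by
          rw [hη]; field_simp
  -- main estimate
  refine ⟨φ, hφmono, ?_⟩
  intro m n hmn' a
  set Sm : ℕ → X := fun m => ∑ i ∈ Finset.range m, a i • u (φ i) with hSm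
  obtain ⟨m₀, hm₀mem, hm₀max⟩ := Finset.exists_max_image (Finset.range (n+1))
    (fun m => ‖Sm m‖) ⟨0, by simp⟩
  have hm₀n : m₀ ≤ n := by
    have := Finset.mem_range.mp hm₀mem; omega
  set M : ℝ := ‖Sm m₀‖ with hM
  have hM0 : 0 ≤ M := norm_nonneg _
  have hMle : ∀ j, j ≤ n → ‖Sm j‖ ≤ M := fun j hj =>
    hm₀max j (Finset.mem_range.mpr (by omega))
  have ha : ∀ i, i < n → |a i| ≤ 2 * M := by
    intro i hi
    have h1 : Sm (i+1) - Sm i = a i • u (φ i) := by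
      rw [hSm]; simp [Finset.sum_range_succ]
    have h2 : ‖a i • u (φ i)‖ = |a i| := by
      rw [norm_smul, Real.norm_eq_abs, hunorm, mul_one]
    calc |a i| = ‖Sm (i+1) - Sm i‖ := by rw [h1, h2]
      _ ≤ ‖Sm (i+1)‖ + ‖Sm i‖ := norm_sub_le _ _
      _ ≤ M + M := add_le_add (hMle _ (by omega)) (hMle _ (by omega))
      _ = 2 * M := by ring
  -- key inequality
  have hkey : M ≤ K * ‖Sm n‖ + 6 * δ * M := by
    have hdecomp : Sm m₀ = P (q m₀) (Sm n) - P (q m₀) (Sm n - Sm m₀)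
        + (Sm m₀ - P (q m₀) (Sm m₀)) := by
      rw [map_sub]; abel
    have ht1 : ‖P (q m₀) (Sm n)‖ ≤ K * ‖Sm n‖ := hPK _ _
    have hIco : Sm n - Sm m₀ = ∑ i ∈ Finset.Ico m₀ n, a i • u (φ i) :=
      (Finset.sum_Ico_eq_sub _ hm₀n).symm
    have ht2 : ‖P (q m₀) (Sm n - Sm m₀)‖ ≤ 4 * δ * M := by
      rw [hIco, map_sum]
      calc ‖∑ i ∈ Finset.Ico m₀ n, P (q m₀) (a i • u (φ i))‖
          ≤ ∑ i ∈ Finset.Ico m₀ n, ‖P (q m₀) (a i • u (φ i))‖ := norm_sum_le _ _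
        _ = ∑ i ∈ Finset.Ico m₀ n, |a i| * ‖P (q m₀) (u (φ i))‖ := by
            refine Finset.sum_congr rfl fun i _ => ?_
            rw [map_smul, norm_smul, Real.norm_eq_abs]
        _ ≤ ∑ i ∈ Finset.Ico m₀ n, (2 * M) * ((1/2 : ℝ)^i * δ) := by
            refine Finset.sum_le_sum fun i hi => ?_
            obtain ⟨h1, h2⟩ := Finset.mem_Ico.mp hi
            exact mul_le_mul (ha i h2) (D2 m₀ i h1) (norm_nonneg _) (by linarith)
        _ = (2 * M * δ) * ∑ i ∈ Finset.Ico m₀ n, (1/2 : ℝ)^i := by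
            rw [Finset.mul_sum]; exact Finset.sum_congr rfl fun i _ => by ring
        _ ≤ (2 * M * δ) * ∑ i ∈ Finset.range n, (1/2 : ℝ)^i := by
            refine mul_le_mul_of_nonneg_left ?_ (by positivity)
            refine Finset.sum_le_sum_of_subset_of_nonneg ?_ fun i _ _ => by positivity
            intro i hi; rw [Finset.mem_range]; exact (Finset.mem_Ico.mp hi).2
        _ ≤ (2 * M * δ) * 2 :=
            mul_le_mul_of_nonneg_left (sum_geometric_two_le n) (by positivity)
        _ = 4 * δ * M := by ring
    have ht3 : ‖Sm m₀ - P (q m₀) (Sm m₀)‖ ≤ 2 * δ * M := by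
      have heq : Sm m₀ - P (q m₀) (Sm m₀)
          = ∑ i ∈ Finset.range m₀, a i • (u (φ i) - P (q m₀) (u (φ i))) := by
        simp only [hSm, map_sum, map_smul, smul_sub, ← Finset.sum_sub_distrib]
      rw [heq]
      have hm₀1 : (0:ℝ) < (m₀ : ℝ) + 1 := by positivity
      calc ‖∑ i ∈ Finset.range m₀, a i • (u (φ i) - P (q m₀) (u (φ i)))‖
          ≤ ∑ i ∈ Finset.range m₀, ‖a i • (u (φ i) - P (q m₀) (u (φ i)))‖ :=
            norm_sum_le _ _
        _ = ∑ i ∈ Finset.range m₀, |a i| * ‖u (φ i) - P (q m₀) (u (φ i))‖ := by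
            refine Finset.sum_congr rfl fun i _ => ?_
            rw [norm_smul, Real.norm_eq_abs]
        _ ≤ ∑ i ∈ Finset.range m₀, (2 * M) * (δ / (m₀ + 1)) := by
            refine Finset.sum_le_sum fun i hi => ?_
            have hi' := Finset.mem_range.mp hi
            exact mul_le_mul (ha i (by omega)) (D1 m₀ i hi') (norm_nonneg _)
              (by linarith)
        _ = (m₀ : ℝ) * ((2 * M) * (δ / (m₀ + 1))) := by
            rw [Finset.sum_const, Finset.card_range, nsmul_eq_mul]
        _ = (2 * M * δ) * ((m₀ : ℝ) / ((m₀ : ℝ) + 1)) := by ring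
        _ ≤ (2 * M * δ) * 1 := by
            refine mul_le_mul_of_nonneg_left ?_ (by positivity)
            rw [div_le_one hm₀1]; linarith
        _ = 2 * δ * M := by ring
    have htri : ‖Sm m₀‖ ≤ ‖P (q m₀) (Sm n)‖ + ‖P (q m₀) (Sm n - Sm m₀)‖
        + ‖Sm m₀ - P (q m₀) (Sm m₀)‖ := by
      have h1 : ‖Sm m₀‖ = ‖P (q m₀) (Sm n) - P (q m₀) (Sm n - Sm m₀)
          + (Sm m₀ - P (q m₀) (Sm m₀))‖ := by rw [← hdecomp]
      rw [h1]
      calc ‖P (q m₀) (Sm n) - P (q m₀) (Sm n - Sm m₀) + (Sm m₀ - P (q m₀) (Sm m₀))‖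
          ≤ ‖P (q m₀) (Sm n) - P (q m₀) (Sm n - Sm m₀)‖
            + ‖Sm m₀ - P (q m₀) (Sm m₀)‖ := norm_add_le _ _
        _ ≤ ‖P (q m₀) (Sm n)‖ + ‖P (q m₀) (Sm n - Sm m₀)‖
            + ‖Sm m₀ - P (q m₀) (Sm m₀)‖ :=
            add_le_add_left (norm_sub_le _ _) _
    rw [hM]
    linarith
  have hfin : M ≤ (K + ε) * ‖Sm n‖ := by
    have hδ8 : δ * (8 * (K + ε)) = ε := by
      rw [hδdef]; field_simp
    nlinarith [norm_nonneg (Sm n), mul_nonneg (mul_nonneg hε.le hKε.le) (norm_nonneg (Sm n)),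
      mul_le_mul_of_nonneg_left hkey (by positivity : (0:ℝ) ≤ 8 * (K + ε))]
  calc ‖Sm m‖ ≤ M := hMle m hmn'
    _ ≤ (K + ε) * ‖Sm n‖ := hfin
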